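/- For every n ≥ 1, the dihedral group D_{2n} of order 2n (generated by a and b with a² = bⁿ = 1 and bab = a) contains an element x ≠ 1 that has no Smarandache inverse. -/

import Mathlib

/-- In a group `G` with identity `1`, an element `x ≠ 1` has a Smarandache inverse
if there are `y a b : G` with `x*y = 1`, each of `a`, `b` distinct from `1`, `x`
and `y`, and `x*a = y`, `y*b = x`, `a*b = 1`. -/
def HasSmarandacheInverse {G : Type*} [Group G] (x : G) : Prop :=
  ∃ y a b : G, x * y = 1 ∧
    a ≠ 1 ∧ a ≠ x ∧ a ≠ y ∧ b ≠ 1 ∧ b ≠ x ∧ b ≠ y ∧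
    x * a = y ∧ y * b = x ∧ a * b = 1

/-- For every `n ≥ 1`, the dihedral group of order `2n` contains an element `x ≠ 1`
having no Smarandache inverse. -/
theorem dihedralGroup_has_element_with_no_smarandache_inverse (n : ℕ) (hn : 1 ≤ n) :
    ∃ x : DihedralGroup n, x ≠ 1 ∧ ¬ HasSmarandacheInverse x := by
  refine ⟨DihedralGroup.sr 0, by simp [DihedralGroup.one_def, -DihedralGroup.r_zero], ?_⟩
  rintro ⟨y, a, b, hxy, ha1, hax, hay, -, -, -, hxa, -, -⟩
  have hx2 : (DihedralGroup.sr 0 : DihedralGroup n) * DihedralGroup.sr 0 = 1 := by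
    simp [DihedralGroup.sr_mul_sr, DihedralGroup.one_def, -DihedralGroup.r_zero]
  have hyx : y = DihedralGroup.sr 0 := by
    have := mul_left_cancel (a := DihedralGroup.sr 0) (hxy.trans hx2.symm)
    exact this
  rw [hyx] at hxa
  have : a = 1 := by
    have := mul_left_cancel (a := DihedralGroup.sr 0) (hxa.trans (mul_one _).symm)
    exact this
  exact ha1 this
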